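/- Let C be a circle of radius r_c with 2r_c ≥ W, packed in a rectangle, and consider a grid of axis-parallel cells each of width εW and height (1+γ)εW overlaid on the rectangle, where 0 < ε ≤ 1/8 and γ ≥ 0. Let D be the set of grid cells that intersect C but are not contained in C. Then Area(D) ≤ (1+γ)·16ε·Area(C). -/

import Mathlib

open MeasureTheory Set

private lemma aux_Ioo_disj {w : ℝ} (hw : 0 < w) {a b : ℤ} (hab : a ≠ b) :
    Disjoint (Set.Ioo ((a : ℝ) * w) (((a : ℝ) + 1) * w))
      (Set.Ioo ((b : ℝ) * w) (((b : ℝ) + 1) * w)) := by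
  rw [Set.disjoint_left]
  rintro x ⟨h1, h2⟩ ⟨h3, h4⟩
  rcases lt_or_gt_of_ne hab with h | h
  · have : ((a : ℝ) + 1) ≤ (b : ℝ) := by exact_mod_cast h
    nlinarith
  · have : ((b : ℝ) + 1) ≤ (a : ℝ) := by exact_mod_cast h
    nlinarith

set_option maxHeartbeats 1000000 in
/-- Wasted-cell bound: grid cells of size `εW × (1+γ)εW` that intersect a
circle of radius `r_c` (with `2r_c ≥ W`) without being contained in it have
total area at most `(1+γ)·16ε·Area(C)`. -/
theorem stmt15 (W ε γ cx cy r_c : ℝ) (hW : 0 < W) (hε0 : 0 < ε) (hε : ε ≤ 1 / 8)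
    (hγ : 0 ≤ γ) (hrc : W ≤ 2 * r_c)
    (S : Finset (ℤ × ℤ))
    (hS : ∀ mn ∈ S,
      (∃ zx zy : ℝ, (mn.1 : ℝ) * (ε * W) ≤ zx ∧ zx ≤ ((mn.1 : ℝ) + 1) * (ε * W) ∧
        (mn.2 : ℝ) * ((1 + γ) * ε * W) ≤ zy ∧ zy ≤ ((mn.2 : ℝ) + 1) * ((1 + γ) * ε * W) ∧
        (zx - cx) ^ 2 + (zy - cy) ^ 2 < r_c ^ 2) ∧
      (∃ zx zy : ℝ, (mn.1 : ℝ) * (ε * W) ≤ zx ∧ zx ≤ ((mn.1 : ℝ) + 1) * (ε * W) ∧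
        (mn.2 : ℝ) * ((1 + γ) * ε * W) ≤ zy ∧ zy ≤ ((mn.2 : ℝ) + 1) * ((1 + γ) * ε * W) ∧
        (zx - cx) ^ 2 + (zy - cy) ^ 2 ≥ r_c ^ 2)) :
    (S.card : ℝ) * (ε * W * ((1 + γ) * ε * W)) ≤
      (1 + γ) * 16 * ε * (Real.pi * r_c ^ 2) := by
  have hπ : (3.14 : ℝ) ≤ Real.pi := by
    have := Real.pi_gt_d6; linarith
  set w : ℝ := ε * W with hw_def
  set h : ℝ := (1 + γ) * ε * W with hh_def
  have hw : 0 < w := by positivity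
  have hh : 0 < h := by positivity
  have hr : 0 < r_c := by linarith
  have hwr : w ≤ r_c / 4 := by
    rw [hw_def]; nlinarith
  have hhr : h ≤ 2 * (1 + γ) * ε * r_c := by
    rw [hh_def]; nlinarith
  set d : ℝ := w + h with hd_def
  by_cases hcase : d ≤ r_c
  · -- annulus argument
    set c : ℂ := ⟨cx, cy⟩ with hc_def
    set U : ℤ × ℤ → Set ℂ := fun mn =>
      Complex.measurableEquivRealProd ⁻¹'
        (Set.Ioo ((mn.1 : ℝ) * w) (((mn.1 : ℝ) + 1) * w) ×ˢ
         Set.Ioo ((mn.2 : ℝ) * h) (((mn.2 : ℝ) + 1) * h)) with hU_def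
    have hUvol : ∀ mn : ℤ × ℤ, volume (U mn) = ENNReal.ofReal (w * h) := by
      intro mn
      rw [hU_def]
      rw [Complex.volume_preserving_equiv_real_prod.measure_preimage_equiv]
      rw [Measure.volume_eq_prod, Measure.prod_prod, Real.volume_Ioo, Real.volume_Ioo]
      rw [← ENNReal.ofReal_mul (by linarith [hw])]
      congr 1; ring
    have hUmeas : ∀ mn : ℤ × ℤ, MeasurableSet (U mn) := by
      intro mn
      exact (measurableSet_Ioo.prod measurableSet_Ioo).preimage
        Complex.measurableEquivRealProd.measurable
    have hdisj : (↑S : Set (ℤ × ℤ)).PairwiseDisjoint U := by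
      intro a _ b _ hab
      have hcomp : a.1 ≠ b.1 ∨ a.2 ≠ b.2 := by
        by_contra hcon
        push_neg at hcon
        exact hab (Prod.ext hcon.1 hcon.2)
      refine Set.disjoint_left.mpr ?_
      intro z hza hzb
      simp only [hU_def, Set.mem_preimage, Complex.measurableEquivRealProd_apply,
        Set.mem_prod, Set.mem_Ioo] at hza hzb
      rcases hcomp with hne | hne
      · exact Set.disjoint_left.mp (aux_Ioo_disj hw hne)
          ⟨hza.1.1, hza.1.2⟩ ⟨hzb.1.1, hzb.1.2⟩
      · exact Set.disjoint_left.mp (aux_Ioo_disj hh hne)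
          ⟨hza.2.1, hza.2.2⟩ ⟨hzb.2.1, hzb.2.2⟩
    set A : Set ℂ := Metric.closedBall c (r_c + d) \ Metric.ball c (r_c - d) with hA_def
    have hsub : ∀ mn ∈ S, U mn ⊆ A := by
      intro mn hmn z hz
      simp only [hU_def, Set.mem_preimage, Complex.measurableEquivRealProd_apply,
        Set.mem_prod, Set.mem_Ioo] at hz
      obtain ⟨⟨zx, zy, hx1, hx2, hy1, hy2, hin⟩, ⟨vx, vy, gx1, gx2, gy1, gy2, gout⟩⟩ := hS mn hmn
      set zi : ℂ := ⟨zx, zy⟩ with hzi_def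
      set zo : ℂ := ⟨vx, vy⟩ with hzo_def
      have habs_zi : ‖zi - c‖ < r_c := by
        have h2 : (‖zi - c‖) ^ 2 = (zx - cx) ^ 2 + (zy - cy) ^ 2 := by
          rw [Complex.sq_norm, Complex.normSq_apply]
          simp [hzi_def, hc_def, Complex.sub_re, Complex.sub_im]
          ring
        nlinarith [norm_nonneg (zi - c)]
      have habs_zo : r_c ≤ ‖zo - c‖ := by
        have h2 : (‖zo - c‖) ^ 2 = (vx - cx) ^ 2 + (vy - cy) ^ 2 := by
          rw [Complex.sq_norm, Complex.normSq_apply]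
          simp [hzo_def, hc_def, Complex.sub_re, Complex.sub_im]
          ring
        nlinarith [norm_nonneg (zo - c)]
      obtain ⟨⟨hzre1, hzre2⟩, hzim1, hzim2⟩ := hz
      have hnear : ∀ u : ℂ, (mn.1 : ℝ) * w ≤ u.re → u.re ≤ ((mn.1 : ℝ) + 1) * w →
          (mn.2 : ℝ) * h ≤ u.im → u.im ≤ ((mn.2 : ℝ) + 1) * h →
          ‖z - u‖ ≤ d := by
        intro u hre1 hre2 him1 him2
        calc ‖z - u‖ ≤ |(z - u).re| + |(z - u).im| :=
              Complex.norm_le_abs_re_add_abs_im _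
          _ ≤ w + h := by
              simp only [Complex.sub_re, Complex.sub_im]
              gcongr
              · rw [abs_le]; constructor <;> linarith
              · rw [abs_le]; constructor <;> linarith
          _ = d := rfl
      have hnz : ‖z - zi‖ ≤ d := hnear zi hx1 hx2 hy1 hy2
      have hnv : ‖z - zo‖ ≤ d := hnear zo gx1 gx2 gy1 gy2
      constructor
      · rw [Metric.mem_closedBall, Complex.dist_eq]
        calc ‖z - c‖ ≤ ‖z - zi‖ + ‖zi - c‖ := by
              have he : z - c = (z - zi) + (zi - c) := by ring
              rw [he]
              exact norm_add_le _ _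
          _ ≤ r_c + d := by linarith
      · rw [Metric.mem_ball, Complex.dist_eq, not_lt]
        have htri : ‖zo - c‖ ≤ ‖zo - z‖ + ‖z - c‖ := by
          have he : zo - c = (zo - z) + (z - c) := by ring
          rw [he]
          exact norm_add_le _ _
        have : ‖zo - z‖ = ‖z - zo‖ := norm_sub_rev zo z
        linarith [htri, habs_zo, hnv, this ▸ hnv]
    have hball_fin : volume (Metric.ball c (r_c - d)) ≠ ⊤ := by
      rw [Complex.volume_ball]
      exact ENNReal.mul_ne_top (by simp [ENNReal.pow_ne_top, ENNReal.ofReal_ne_top])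
        (by simp)
    have hA_vol : volume A = ENNReal.ofReal ((r_c + d) ^ 2 * Real.pi - (r_c - d) ^ 2 * Real.pi) := by
      rw [hA_def, measure_diff
          (Metric.ball_subset_closedBall.trans (Metric.closedBall_subset_closedBall (by linarith)))
          measurableSet_ball.nullMeasurableSet hball_fin,
        Complex.volume_ball, Complex.volume_closedBall]
      have hpi : (NNReal.pi : ENNReal) = ENNReal.ofReal Real.pi := by
        rw [← NNReal.coe_real_pi, ENNReal.ofReal_coe_nnreal]
      rw [hpi, ← ENNReal.ofReal_pow (by linarith), ← ENNReal.ofReal_pow (by linarith),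
        ← ENNReal.ofReal_mul (by positivity), ← ENNReal.ofReal_mul (by positivity),
        ← ENNReal.ofReal_sub _ (by positivity)]
    have hmain : ENNReal.ofReal ((S.card : ℝ) * (w * h)) ≤ volume A := by
      have h1 : volume (⋃ mn ∈ S, U mn) ≤ volume A := by
        apply measure_mono
        exact Set.iUnion₂_subset hsub
      rw [measure_biUnion_finset hdisj (fun mn _ => hUmeas mn)] at h1
      have h2 : ∑ mn ∈ S, volume (U mn) = (S.card : ENNReal) * ENNReal.ofReal (w * h) := by
        rw [Finset.sum_congr rfl (fun mn _ => hUvol mn), Finset.sum_const, nsmul_eq_mul]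
      rw [h2] at h1
      calc ENNReal.ofReal ((S.card : ℝ) * (w * h))
          = (S.card : ENNReal) * ENNReal.ofReal (w * h) := by
            rw [ENNReal.ofReal_mul (by positivity)]
            congr 1
            exact ENNReal.ofReal_natCast _
        _ ≤ volume A := h1
    rw [hA_vol] at hmain
    have hreal : (S.card : ℝ) * (w * h) ≤ (r_c + d) ^ 2 * Real.pi - (r_c - d) ^ 2 * Real.pi := by
      have hq : (0:ℝ) ≤ (r_c + d) ^ 2 * Real.pi - (r_c - d) ^ 2 * Real.pi := by
        have hd0 : (0:ℝ) ≤ d := by rw [hd_def]; linarith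
        have : (r_c + d) ^ 2 * Real.pi - (r_c - d) ^ 2 * Real.pi = 4 * r_c * d * Real.pi := by
          ring
        rw [this]
        exact mul_nonneg (mul_nonneg (mul_nonneg (by norm_num) hr.le) hd0) Real.pi_pos.le
      exact (ENNReal.ofReal_le_ofReal_iff hq).mp hmain
    -- (r_c+d)^2 π - (r_c-d)^2 π = 4 r_c d π ≤ RHS
    have hfinal : (r_c + d) ^ 2 * Real.pi - (r_c - d) ^ 2 * Real.pi
        ≤ (1 + γ) * 16 * ε * (Real.pi * r_c ^ 2) := by
      have hexp : (r_c + d) ^ 2 * Real.pi - (r_c - d) ^ 2 * Real.pi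
          = 4 * r_c * d * Real.pi := by ring
      rw [hexp]
      have hd_le : d ≤ 2 * ε * r_c + 2 * (1 + γ) * ε * r_c := by
        have : w ≤ 2 * ε * r_c := by rw [hw_def]; nlinarith
        rw [hd_def]; linarith
      have hε_le : ε ≤ (1 + γ) * ε := by nlinarith
      calc 4 * r_c * d * Real.pi = (4 * r_c * Real.pi) * d := by ring
        _ ≤ (4 * r_c * Real.pi) * (2 * ε * r_c + 2 * (1 + γ) * ε * r_c) :=
            mul_le_mul_of_nonneg_left hd_le (by positivity)
        _ = (8 * ε + 8 * ((1 + γ) * ε)) * (Real.pi * r_c ^ 2) := by ring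
        _ ≤ ((1 + γ) * 16 * ε) * (Real.pi * r_c ^ 2) :=
            mul_le_mul_of_nonneg_right (by nlinarith) (by positivity)
    calc (S.card : ℝ) * (ε * W * ((1 + γ) * ε * W)) = (S.card : ℝ) * (w * h) := by
          rw [hw_def, hh_def]
      _ ≤ _ := le_trans hreal hfinal
  · -- counting argument
    push_neg at hcase
    rcases S.eq_empty_or_nonempty with hSe | hSne
    · subst hSe
      simp only [Finset.card_empty, Nat.cast_zero, zero_mul]
      positivity
    set a1 : ℤ := ⌈(cx - r_c) / w⌉ - 1 with ha1
    set b1 : ℤ := ⌊(cx + r_c) / w⌋ with hb1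
    set a2 : ℤ := ⌈(cy - r_c) / h⌉ - 1 with ha2
    set b2 : ℤ := ⌊(cy + r_c) / h⌋ with hb2
    have hmem : ∀ mn ∈ S, mn ∈ Finset.Icc a1 b1 ×ˢ Finset.Icc a2 b2 := by
      intro mn hmn
      obtain ⟨⟨zx, zy, hx1, hx2, hy1, hy2, hin⟩, -⟩ := hS mn hmn
      have hxlt : zx < cx + r_c := by nlinarith [sq_nonneg (zy - cy), sq_nonneg (zx - cx + r_c)]
      have hxgt : cx - r_c < zx := by nlinarith [sq_nonneg (zy - cy), sq_nonneg (zx - cx - r_c)]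
      have hylt : zy < cy + r_c := by nlinarith [sq_nonneg (zx - cx), sq_nonneg (zy - cy + r_c)]
      have hygt : cy - r_c < zy := by nlinarith [sq_nonneg (zx - cx), sq_nonneg (zy - cy - r_c)]
      simp only [Finset.mem_product, Finset.mem_Icc]
      refine ⟨⟨?_, ?_⟩, ?_, ?_⟩
      · rw [ha1, sub_le_iff_le_add]
        rw [Int.ceil_le]
        push_cast
        rw [div_le_iff₀ hw]
        nlinarith
      · rw [hb1, Int.le_floor]
        rw [le_div_iff₀ hw]
        nlinarith
      · rw [ha2, sub_le_iff_le_add]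
        rw [Int.ceil_le]
        push_cast
        rw [div_le_iff₀ hh]
        nlinarith
      · rw [hb2, Int.le_floor]
        rw [le_div_iff₀ hh]
        nlinarith
    have hsubS : S ⊆ Finset.Icc a1 b1 ×ˢ Finset.Icc a2 b2 := hmem
    obtain ⟨mn0, hmn0⟩ := hSne
    have hmn0' := hmem mn0 hmn0
    simp only [Finset.mem_product, Finset.mem_Icc] at hmn0'
    have hab1 : a1 ≤ b1 := le_trans hmn0'.1.1 hmn0'.1.2
    have hab2 : a2 ≤ b2 := le_trans hmn0'.2.1 hmn0'.2.2
    have hcard : (S.card : ℝ) ≤ ((b1 - a1 + 1 : ℤ) : ℝ) * ((b2 - a2 + 1 : ℤ) : ℝ) := by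
      have h1 : S.card ≤ (Finset.Icc a1 b1 ×ˢ Finset.Icc a2 b2).card :=
        Finset.card_le_card hsubS
      rw [Finset.card_product, Int.card_Icc, Int.card_Icc] at h1
      have e1 : ((b1 + 1 - a1).toNat : ℤ) = b1 + 1 - a1 := Int.toNat_of_nonneg (by omega)
      have e2 : ((b2 + 1 - a2).toNat : ℤ) = b2 + 1 - a2 := Int.toNat_of_nonneg (by omega)
      calc (S.card : ℝ) ≤ (((b1 + 1 - a1).toNat * (b2 + 1 - a2).toNat : ℕ) : ℝ) := by
            exact_mod_cast h1
        _ = ((b1 - a1 + 1 : ℤ) : ℝ) * ((b2 - a2 + 1 : ℤ) : ℝ) := by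
            have f1 : (((b1 + 1 - a1).toNat : ℕ) : ℝ) = ((b1 - a1 + 1 : ℤ) : ℝ) := by
              rw [← Int.cast_natCast (R := ℝ), e1]
              norm_cast
              omega
            have f2 : (((b2 + 1 - a2).toNat : ℕ) : ℝ) = ((b2 - a2 + 1 : ℤ) : ℝ) := by
              rw [← Int.cast_natCast (R := ℝ), e2]
              norm_cast
              omega
            rw [Nat.cast_mul, f1, f2]
    have hc1 : ((b1 - a1 + 1 : ℤ) : ℝ) * w ≤ 2 * r_c + 2 * w := by
      have hfl : ((b1 : ℝ)) ≤ (cx + r_c) / w := Int.floor_le _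
      have hcl : (cx - r_c) / w ≤ ((a1 : ℝ) + 1) := by
        rw [ha1]; push_cast; simpa using Int.le_ceil ((cx - r_c) / w)
      have : ((b1 - a1 + 1 : ℤ) : ℝ) ≤ 2 * r_c / w + 2 := by
        push_cast
        have h2 : (cx + r_c) / w - (cx - r_c) / w = 2 * r_c / w := by
          field_simp; ring
        linarith
      calc ((b1 - a1 + 1 : ℤ) : ℝ) * w ≤ (2 * r_c / w + 2) * w := by
            apply mul_le_mul_of_nonneg_right this hw.le
        _ = 2 * r_c + 2 * w := by field_simp
    have hc2 : ((b2 - a2 + 1 : ℤ) : ℝ) * h ≤ 2 * r_c + 2 * h := by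
      have hfl : ((b2 : ℝ)) ≤ (cy + r_c) / h := Int.floor_le _
      have hcl : (cy - r_c) / h ≤ ((a2 : ℝ) + 1) := by
        rw [ha2]; push_cast; simpa using Int.le_ceil ((cy - r_c) / h)
      have : ((b2 - a2 + 1 : ℤ) : ℝ) ≤ 2 * r_c / h + 2 := by
        push_cast
        have h2 : (cy + r_c) / h - (cy - r_c) / h = 2 * r_c / h := by
          field_simp; ring
        linarith
      calc ((b2 - a2 + 1 : ℤ) : ℝ) * h ≤ (2 * r_c / h + 2) * h := by
            apply mul_le_mul_of_nonneg_right this hh.le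
        _ = 2 * r_c + 2 * h := by field_simp
    have hkey : (S.card : ℝ) * (w * h) ≤ (2 * r_c + 2 * w) * (2 * r_c + 2 * h) := by
      have hp1 : (0:ℝ) ≤ ((b1 - a1 + 1 : ℤ) : ℝ) := by exact_mod_cast (by omega : (0:ℤ) ≤ b1 - a1 + 1)
      have hp2 : (0:ℝ) ≤ ((b2 - a2 + 1 : ℤ) : ℝ) := by exact_mod_cast (by omega : (0:ℤ) ≤ b2 - a2 + 1)
      calc (S.card : ℝ) * (w * h)
          ≤ (((b1 - a1 + 1 : ℤ) : ℝ) * ((b2 - a2 + 1 : ℤ) : ℝ)) * (w * h) := by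
            apply mul_le_mul_of_nonneg_right hcard (by positivity)
        _ = (((b1 - a1 + 1 : ℤ) : ℝ) * w) * (((b2 - a2 + 1 : ℤ) : ℝ) * h) := by ring
        _ ≤ (2 * r_c + 2 * w) * (2 * r_c + 2 * h) := by
            apply mul_le_mul hc1 hc2 (by positivity) (by positivity)
    -- case condition: r_c < d = w + h, with w ≤ r_c/4 gives (1+γ)ε > 3/8
    have hu : 3 / 8 < (1 + γ) * ε := by
      have hw2 : w ≤ 2 * ε * r_c := by rw [hw_def]; nlinarith
      have : r_c < 2 * ε * r_c + 2 * (1 + γ) * ε * r_c := by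
        have := hcase
        rw [hd_def] at this
        linarith [hw2, hhr]
      nlinarith
    have hfinal : (2 * r_c + 2 * w) * (2 * r_c + 2 * h)
        ≤ (1 + γ) * 16 * ε * (Real.pi * r_c ^ 2) := by
      have h1 : 2 * r_c + 2 * w ≤ 5 / 2 * r_c := by linarith
      have h2 : 2 * r_c + 2 * h ≤ 2 * r_c + 4 * ((1 + γ) * ε) * r_c := by
        rw [hh_def]; nlinarith
      have h3 : (2 * r_c + 2 * w) * (2 * r_c + 2 * h)
          ≤ 5 / 2 * r_c * (2 * r_c + 4 * ((1 + γ) * ε) * r_c) := by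
        apply mul_le_mul h1 h2 (by positivity) (by positivity)
      have h4 : 5 / 2 * r_c * (2 * r_c + 4 * ((1 + γ) * ε) * r_c)
          = (5 + 10 * ((1 + γ) * ε)) * r_c ^ 2 := by ring
      have h5 : (5 + 10 * ((1 + γ) * ε)) * r_c ^ 2
          ≤ (1 + γ) * 16 * ε * (Real.pi * r_c ^ 2) := by
        have hsq : (0:ℝ) < r_c ^ 2 := by positivity
        have hu' : 5 + 10 * ((1 + γ) * ε) ≤ 16 * ((1 + γ) * ε) * Real.pi := by
          have hmul : 16 * ((1 + γ) * ε) * 3.14 ≤ 16 * ((1 + γ) * ε) * Real.pi :=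
            mul_le_mul_of_nonneg_left hπ (by positivity)
          nlinarith [hu, hmul]
        calc (5 + 10 * ((1 + γ) * ε)) * r_c ^ 2
            ≤ (16 * ((1 + γ) * ε) * Real.pi) * r_c ^ 2 :=
              mul_le_mul_of_nonneg_right hu' (le_of_lt hsq)
          _ = (1 + γ) * 16 * ε * (Real.pi * r_c ^ 2) := by ring
      linarith
    calc (S.card : ℝ) * (ε * W * ((1 + γ) * ε * W)) = (S.card : ℝ) * (w * h) := by
          rw [hw_def, hh_def]
      _ ≤ _ := le_trans hkey hfinal
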